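/- Let f: ℝⁿ → ℝ be continuously differentiable at x. Then the limiting Fréchet ε-subdifferential of f at x equals ∇f(x) + εB, where B is the closed unit ball in ℝⁿ. -/

import Mathlib

open Filter

/-- Fréchet ε-subdifferential of a real-valued function. -/
def fesub {n : ℕ} (ε : ℝ) (f : EuclideanSpace ℝ (Fin n) → ℝ) (x : EuclideanSpace ℝ (Fin n)) :
    Set (EuclideanSpace ℝ (Fin n)) :=
  {v | ∀ η : ℝ, 0 < η → ∀ᶠ y in nhds x,
      f x + (inner ℝ v (y - x) : ℝ) - (ε + η) * ‖y - x‖ ≤ f y}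

/-- Limiting Fréchet ε-subdifferential. -/
def lfesub {n : ℕ} (ε : ℝ) (f : EuclideanSpace ℝ (Fin n) → ℝ) (x : EuclideanSpace ℝ (Fin n)) :
    Set (EuclideanSpace ℝ (Fin n)) :=
  {v | ∃ (yl vl : ℕ → EuclideanSpace ℝ (Fin n)),
      Tendsto yl atTop (nhds x) ∧ Tendsto (fun l => f (yl l)) atTop (nhds (f x)) ∧
      (∀ l, vl l ∈ fesub ε f (yl l)) ∧ Tendsto vl atTop (nhds v)}

lemma fesub_norm_le {n : ℕ} {ε : ℝ} (hε : 0 ≤ ε) {f : EuclideanSpace ℝ (Fin n) → ℝ}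
    {y u : EuclideanSpace ℝ (Fin n)} {f' : EuclideanSpace ℝ (Fin n) →L[ℝ] ℝ}
    (hd : HasFDerivAt f f' y) (hu : u ∈ fesub ε f y) :
    ‖u - (InnerProductSpace.toDual ℝ _).symm f'‖ ≤ ε := by
  set g := (InnerProductSpace.toDual ℝ (EuclideanSpace ℝ (Fin n))).symm f' with hg
  set w := u - g with hw
  rcases eq_or_ne w 0 with h0 | h0
  · rw [h0, norm_zero]; exact hε
  have key : ∀ η : ℝ, 0 < η → ‖w‖ ≤ ε + 2 * η := by
    intro η hη
    have h1 := hu η hη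
    have h2 : ∀ᶠ z in nhds y, ‖f z - f y - f' (z - y)‖ ≤ η * ‖z - y‖ := by
      have := hd.isLittleO.def hη
      simpa using this
    have h3 : ∀ᶠ z in nhds y, (inner ℝ w (z - y) : ℝ) ≤ (ε + 2 * η) * ‖z - y‖ := by
      filter_upwards [h1, h2] with z hz1 hz2
      have hgz : (inner ℝ g (z - y) : ℝ) = f' (z - y) :=
        InnerProductSpace.toDual_symm_apply
      rw [Real.norm_eq_abs] at hz2
      have hA := abs_le.mp hz2
      have hB : (inner ℝ u (z - y) : ℝ) - (ε + η) * ‖z - y‖ ≤ f z - f y := by linarith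
      have : (inner ℝ w (z - y) : ℝ) = (inner ℝ u (z - y) : ℝ) - f' (z - y) := by
        rw [hw, inner_sub_left, hgz]
      linarith
    -- pick z = y + t • w for small t > 0
    have htend : Tendsto (fun t : ℝ => y + t • w) (nhdsWithin 0 (Set.Ioi 0)) (nhds y) := by
      have : Tendsto (fun t : ℝ => y + t • w) (nhds 0) (nhds y) := by
        have : Continuous fun t : ℝ => y + t • w := by continuity
        simpa using this.tendsto 0
      exact this.mono_left nhdsWithin_le_nhds
    have h4 := htend.eventually h3
    obtain ⟨t, ht, htpos⟩ := (h4.and self_mem_nhdsWithin).exists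
    replace htpos : (0:ℝ) < t := htpos
    have hsimp : (inner ℝ w ((y + t • w) - y) : ℝ) = t * ‖w‖ ^ 2 := by
      rw [add_sub_cancel_left, real_inner_smul_right, real_inner_self_eq_norm_sq]
    have hnorm : ‖(y + t • w) - y‖ = t * ‖w‖ := by
      simp [norm_smul, abs_of_pos htpos]
    rw [hsimp, hnorm] at ht
    have hwpos : 0 < ‖w‖ := norm_pos_iff.mpr h0
    have h5 : (t * ‖w‖) * ‖w‖ ≤ (t * ‖w‖) * (ε + 2 * η) := by nlinarith
    exact le_of_mul_le_mul_left h5 (mul_pos htpos hwpos)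
  have : ∀ δ : ℝ, 0 < δ → ‖w‖ ≤ ε + δ := fun δ hδ => by
    have := key (δ / 2) (by linarith)
    linarith
  exact le_of_forall_pos_le_add this


theorem stmt_9 {n : ℕ} (f : EuclideanSpace ℝ (Fin n) → ℝ) (x : EuclideanSpace ℝ (Fin n))
    (hf : ContDiffAt ℝ 1 f x) (ε : ℝ) (hε : 0 ≤ ε) :
    lfesub ε f x = Metric.closedBall (gradient f x) ε := by
  obtain ⟨f', s, hs, hcont, hderiv⟩ := contDiffAt_one_iff.mp hf
  have hx : x ∈ s := mem_of_mem_nhds hs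
  have hfx : HasFDerivAt f (f' x) x := hderiv x hx
  have hgrad : gradient f x = (InnerProductSpace.toDual ℝ _).symm (f' x) := by
    rw [gradient, hfx.fderiv]
  apply Set.eq_of_subset_of_subset
  · -- ⊆
    rintro v ⟨yl, vl, hyl, _, hvl, hvlim⟩
    rw [Metric.mem_closedBall, dist_eq_norm]
    -- eventually yl l ∈ s
    have hev : ∀ᶠ l in atTop, yl l ∈ s := hyl.eventually (eventually_mem_nhds_iff.mpr ?_ |>.mono fun z hz => mem_of_mem_nhds hz)
    swap
    · exact hs
    have hbound : ∀ᶠ l in atTop, ‖vl l - (InnerProductSpace.toDual ℝ _).symm (f' (yl l))‖ ≤ ε := by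
      filter_upwards [hev] with l hl
      exact fesub_norm_le hε (hderiv _ hl) (hvl l)
    have hcg : Tendsto (fun l => (InnerProductSpace.toDual ℝ
        (EuclideanSpace ℝ (Fin n))).symm (f' (yl l))) atTop (nhds (gradient f x)) := by
      rw [hgrad]
      exact ((InnerProductSpace.toDual ℝ _).symm.continuous.tendsto _).comp
        (((hcont.continuousAt hs).tendsto).comp hyl)
    have htend : Tendsto (fun l => ‖vl l - (InnerProductSpace.toDual ℝ
        (EuclideanSpace ℝ (Fin n))).symm (f' (yl l))‖) atTop (nhds ‖v - gradient f x‖) :=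
      (continuous_norm.tendsto _).comp (hvlim.sub hcg)
    exact le_of_tendsto htend hbound
  · -- ⊇
    intro v hv
    rw [Metric.mem_closedBall, dist_eq_norm] at hv
    refine ⟨fun _ => x, fun _ => v, tendsto_const_nhds, tendsto_const_nhds, fun _ => ?_,
      tendsto_const_nhds⟩
    intro η hη
    have h2 : ∀ᶠ z in nhds x, ‖f z - f x - f' x (z - x)‖ ≤ η * ‖z - x‖ := by
      simpa using hfx.isLittleO.def hη
    filter_upwards [h2] with z hz
    have hgz : (inner ℝ (gradient f x) (z - x) : ℝ) = f' x (z - x) := by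
      rw [hgrad]; exact InnerProductSpace.toDual_symm_apply
    have hcs : (inner ℝ v (z - x) : ℝ) - (inner ℝ (gradient f x) (z - x) : ℝ) ≤ ε * ‖z - x‖ := by
      have := real_inner_le_norm (v - gradient f x) (z - x)
      rw [inner_sub_left] at this
      calc (inner ℝ v (z - x) : ℝ) - (inner ℝ (gradient f x) (z - x) : ℝ)
          ≤ ‖v - gradient f x‖ * ‖z - x‖ := this
        _ ≤ ε * ‖z - x‖ := by
            exact mul_le_mul_of_nonneg_right hv (norm_nonneg _)
    rw [Real.norm_eq_abs] at hz
    have hA := abs_le.mp hz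
    linarith
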